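/- Let a, c, k ∈ ℝ with k > 0, c < 0 and k² < c² − 4a. Set s := √(c² − 4a), γ := s/√(s² − k²), and define u : ℝ → ℝ by u(z) := k²/(√(s² − k²)·(γ − cos(k z))) − (s + c)/2. Then ∫₀^{2π/k} u(z) dz = 2π − (π/k)(√(c² − 4a) + c). -/

import Mathlib

lemma bo_deriv (k s b z : ℝ) (hk : 0 < k) (hks : k < s) (hb : 0 < b)
    (hb2 : b ^ 2 = s ^ 2 - k ^ 2) :
    HasDerivAt (fun z => k * z -
      2 * Real.arctan ((k - s) / b * Real.sin (k * z) / (1 + (k - s) / b * Real.cos (k * z))))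
      (k ^ 2 / (b * (s / b - Real.cos (k * z)))) z := by
  set p : ℝ := (k - s) / b with hp
  set C : ℝ := Real.cos (k * z) with hC
  set S : ℝ := Real.sin (k * z) with hS
  have hsb : b < s := by nlinarith
  have hskb : s - k < b := by nlinarith
  have hp0 : p < 0 := div_neg_of_neg_of_pos (by linarith) hb
  have hp1 : -1 < p := by
    rw [hp, lt_div_iff₀ hb]; linarith
  have hC1 : -1 ≤ C := Real.neg_one_le_cos _
  have hC2 : C ≤ 1 := Real.cos_le_one _
  have h1 : 0 < 1 + p * C := by
    rcases le_or_gt C 0 with h | h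
    · nlinarith
    · nlinarith
  have hSC : S ^ 2 + C ^ 2 = 1 := Real.sin_sq_add_cos_sq _
  have hkz : HasDerivAt (fun z : ℝ => k * z) k z := by
    simpa using (hasDerivAt_id z).const_mul k
  have hsin : HasDerivAt (fun z => Real.sin (k * z)) (C * k) z :=
    (Real.hasDerivAt_sin (k * z)).comp z hkz
  have hcos : HasDerivAt (fun z => Real.cos (k * z)) (-S * k) z :=
    (Real.hasDerivAt_cos (k * z)).comp z hkz
  have hq : HasDerivAt (fun z => p * Real.sin (k * z) / (1 + p * Real.cos (k * z)))
      ((p * (C * k) * (1 + p * C) - p * S * (p * (-S * k))) / (1 + p * C) ^ 2) z :=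
    (hsin.const_mul p).div ((hcos.const_mul p).const_add 1) (ne_of_gt h1)
  have ha : HasDerivAt (fun z => Real.arctan (p * Real.sin (k * z) / (1 + p * Real.cos (k * z))))
      (1 / (1 + (p * S / (1 + p * C)) ^ 2) *
        ((p * (C * k) * (1 + p * C) - p * S * (p * (-S * k))) / (1 + p * C) ^ 2)) z :=
    (Real.hasDerivAt_arctan _).comp z hq
  have final := hkz.sub (ha.const_mul 2)
  refine HasDerivAt.congr_deriv final ?_
  symm
  have hbC : s - b * C > 0 := by nlinarith
  have h2 : (1 : ℝ) + p ^ 2 + 2 * p * C > 0 := by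
    nlinarith [mul_nonneg (by linarith : (0:ℝ) ≤ -2 * p) (by linarith : (0:ℝ) ≤ 1 - C)]
  have hbne : b ≠ 0 := ne_of_gt hb
  have hA : p * (C * k) * (1 + p * C) - p * S * (p * (-S * k)) = p * k * (C + p) := by
    linear_combination p ^ 2 * k * hSC
  have hB : 1 + (p * S / (1 + p * C)) ^ 2 = (1 + p ^ 2 + 2 * p * C) / (1 + p * C) ^ 2 := by
    field_simp
    linear_combination p ^ 2 * hSC
  rw [hA, hB]
  have h1' : (1 + p * C) ≠ 0 := h1.ne'
  have h2' : (1 + p ^ 2 + 2 * p * C) ≠ 0 := h2.ne'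
  rw [one_div_div]
  have hval : (1 + p * C) ^ 2 / (1 + p ^ 2 + 2 * p * C) * (p * k * (C + p) / (1 + p * C) ^ 2)
      = p * k * (C + p) / (1 + p ^ 2 + 2 * p * C) := by
    field_simp
  rw [hval, hp]
  have hd4 : s / b - C ≠ 0 := by
    have he : s / b - C = (s - b * C) / b := by field_simp
    rw [he]; exact (div_pos hbC hb).ne'
  have hDD : 1 + ((k - s) / b) ^ 2 + 2 * ((k - s) / b) * C
      = (b ^ 2 + (k - s) ^ 2 + 2 * b * (k - s) * C) / b ^ 2 := by
    field_simp
  have hD2 : b ^ 2 + (k - s) ^ 2 + 2 * b * (k - s) * C = 2 * (s - k) * (s - b * C) := by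
    linear_combination hb2
  have hD' : b ^ 2 + (k - s) ^ 2 + 2 * b * (k - s) * C ≠ 0 := by
    rw [hD2]
    exact (mul_pos (mul_pos two_pos (by linarith)) hbC).ne'
  rw [hDD, hD2]
  have hsk : s - k ≠ 0 := by linarith
  field_simp
  ring_nf

/-- The mass over one period of Benjamin's explicit `2π/k`-periodic traveling-wave
profile of the Benjamin–Ono equation:
`∫₀^{2π/k} u = 2π − (π/k)(√(c²−4a) + c)`. -/
theorem stmt_10 (a c k : ℝ) (hk : 0 < k) (hc : c < 0) (hlt : k ^ 2 < c ^ 2 - 4 * a)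
    (s γ : ℝ) (hs : s = Real.sqrt (c ^ 2 - 4 * a))
    (hγ : γ = s / Real.sqrt (s ^ 2 - k ^ 2))
    (u : ℝ → ℝ)
    (hu : ∀ z : ℝ, u z
      = k ^ 2 / (Real.sqrt (s ^ 2 - k ^ 2) * (γ - Real.cos (k * z))) - (s + c) / 2) :
    ∫ z in (0:ℝ)..(2 * Real.pi / k), u z
      = 2 * Real.pi - (Real.pi / k) * (Real.sqrt (c ^ 2 - 4 * a) + c) := by
  have h0 : 0 < c ^ 2 - 4 * a := lt_trans (pow_pos hk 2) hlt
  have hs2 : s ^ 2 = c ^ 2 - 4 * a := by rw [hs]; exact Real.sq_sqrt h0.le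
  have hs0 : 0 < s := by rw [hs]; exact Real.sqrt_pos.2 h0
  have hks : k < s := by nlinarith
  set b : ℝ := Real.sqrt (s ^ 2 - k ^ 2) with hbdef
  have hb : 0 < b := Real.sqrt_pos.2 (by nlinarith)
  have hb2 : b ^ 2 = s ^ 2 - k ^ 2 := Real.sq_sqrt (by nlinarith)
  have hsb : b < s := by nlinarith
  have hγ1 : 1 < γ := by
    rw [hγ, lt_div_iff₀ hb]; simpa using hsb
  -- the antiderivative
  set U : ℝ → ℝ := fun z => k * z -
      2 * Real.arctan ((k - s) / b * Real.sin (k * z) / (1 + (k - s) / b * Real.cos (k * z)))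
      - (s + c) / 2 * z with hU
  have hder : ∀ z ∈ Set.uIcc (0 : ℝ) (2 * Real.pi / k), HasDerivAt U (u z) z := by
    intro z _
    have h := (bo_deriv k s b z hk hks hb hb2).sub
      (((hasDerivAt_id z).const_mul ((s + c) / 2)))
    rw [hu z, hγ]
    simp at h
    exact h
  have hne : ∀ z : ℝ, b * (γ - Real.cos (k * z)) ≠ 0 := by
    intro z
    have h1 : 0 < γ - Real.cos (k * z) := by
      have := Real.cos_le_one (k * z); linarith
    exact (mul_pos hb h1).ne'
  have huf : u = fun z => k ^ 2 / (b * (γ - Real.cos (k * z))) - (s + c) / 2 := funext hu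
  have hcont : Continuous u := by
    rw [huf]
    have hc1 : Continuous fun z : ℝ => b * (γ - Real.cos (k * z)) :=
      continuous_const.mul (continuous_const.sub
        (Real.continuous_cos.comp (continuous_const.mul continuous_id)))
    exact (continuous_const.div hc1 hne).sub continuous_const
  rw [intervalIntegral.integral_eq_sub_of_hasDerivAt hder (hcont.intervalIntegrable _ _)]
  have harg : k * (2 * Real.pi / k) = 2 * Real.pi := by field_simp
  rw [hU]
  simp only [harg, Real.sin_two_pi, Real.cos_two_pi, mul_zero, zero_div, mul_one,
    Real.arctan_zero, Real.sin_zero, Real.cos_zero, mul_zero, ← hs]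
  field_simp
  ring
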